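/- For every integer s ≥ 2 there exist real constants h_{1,s},…,h_{⌊s/2⌋,s} (independent of n and p) such that for every positive integer n and every p ≥ 0, with p̂ = X/n and X ~ Poisson(np): E(p̂ − p)^s = n^{−s}·Σ_{j=1}^{⌊s/2⌋} h_{j,s}·(np)^j, and moreover |h_{j,s}| ≤ 2^j·j^s/j! ≤ (2e^{e/(e−1)})^s·(s/ln s)^s for every 1 ≤ j ≤ ⌊s/2⌋. Consequently, there exists a constant C_s > 0 depending only on s such that E|p̂ − p|^s ≤ C_s·( (np)^{s/2} ∨ (np) )/n^s. -/

import Mathlib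

open scoped BigOperators

/-- The Poisson(lam) probability mass function on the nonnegative integers. -/
noncomputable def poissonPMF (lam : ℝ) (k : ℕ) : ℝ :=
  Real.exp (-lam) * lam ^ k / (Nat.factorial k)

/-- Expectation of `f` under the Poisson(lam) distribution. -/
noncomputable def poissonE (lam : ℝ) (f : ℕ → ℝ) : ℝ :=
  ∑' k : ℕ, poissonPMF lam k * f k

noncomputable def aa : ℕ → ℕ → ℝ
  | 0, 0 => 1
  | 0, _+1 => 0
  | _+1, 0 => 0
  | s+1, j+1 => ∑ i ∈ (Finset.range s).attach, (Nat.choose s i.1 : ℝ) * aa i.1 j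
termination_by s j => s
decreasing_by exact Nat.lt_succ_of_lt (Finset.mem_range.mp i.2)

lemma aa_succ_succ (s j : ℕ) :
    aa (s+1) (j+1) = ∑ i ∈ Finset.range s, (Nat.choose s i : ℝ) * aa i j := by
  rw [aa, ← Finset.sum_attach (Finset.range s) (fun i => (Nat.choose s i : ℝ) * aa i j)]

lemma aa_zero_right (s : ℕ) : aa (s+1) 0 = 0 := by rw [aa]

lemma aa_nonneg : ∀ s j, 0 ≤ aa s j := by
  intro s
  induction s using Nat.strong_induction_on with
  | _ s ih =>
    rcases s with _ | s
    · intro j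
      rcases j with _ | j
      · rw [aa]; norm_num
      · rw [aa]
    · intro j
      rcases j with _ | j
      · rw [aa_zero_right]
      · rw [aa_succ_succ]
        refine Finset.sum_nonneg fun i hi => mul_nonneg (by positivity) (ih i ?_ j)
        exact Nat.lt_succ_of_lt (Finset.mem_range.mp hi)

lemma aa_eq_zero : ∀ s j, s < 2 * j → aa s j = 0 := by
  intro s
  induction s using Nat.strong_induction_on with
  | _ s ih =>
    rcases s with _ | s
    · intro j hj
      rcases j with _ | j
      · omega
      · rw [aa]
    · intro j hj
      rcases j with _ | j
      · omega
      · rw [aa_succ_succ]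
        refine Finset.sum_eq_zero fun i hi => ?_
        have hi' : i < s := Finset.mem_range.mp hi
        rw [ih i (by omega) j (by omega), mul_zero]

lemma aa_le : ∀ s j, aa s j ≤ 2^j * (j:ℝ)^s / (Nat.factorial j) := by
  intro s
  induction s using Nat.strong_induction_on with
  | _ s ih =>
    rcases s with _ | s
    · intro j
      rcases j with _ | j
      · rw [aa]; norm_num
      · rw [aa]; positivity
    · intro j
      rcases j with _ | j
      · rw [aa_zero_right]; positivity
      · rw [aa_succ_succ]
        have hfac : (0:ℝ) < (Nat.factorial j : ℝ) := by
          exact_mod_cast Nat.factorial_pos j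
        calc ∑ i ∈ Finset.range s, (Nat.choose s i : ℝ) * aa i j
            ≤ ∑ i ∈ Finset.range s,
                (Nat.choose s i : ℝ) * (2^j * (j:ℝ)^i / (Nat.factorial j)) := by
              refine Finset.sum_le_sum fun i hi => ?_
              exact mul_le_mul_of_nonneg_left
                (ih i (Nat.lt_succ_of_lt (Finset.mem_range.mp hi)) j) (by positivity)
          _ ≤ ∑ i ∈ Finset.range (s+1),
                (Nat.choose s i : ℝ) * (2^j * (j:ℝ)^i / (Nat.factorial j)) := by
              refine Finset.sum_le_sum_of_subset_of_nonneg
                (Finset.range_subset_range.mpr (Nat.le_succ s)) fun i _ _ => by positivity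
          _ = (2^j / (Nat.factorial j)) *
                ∑ i ∈ Finset.range (s+1), (j:ℝ)^i * 1^(s-i) * (Nat.choose s i) := by
              rw [Finset.mul_sum]
              exact Finset.sum_congr rfl fun i _ => by rw [one_pow]; ring
          _ = (2^j / (Nat.factorial j)) * ((j:ℝ)+1)^s := by rw [← add_pow]
          _ ≤ 2^(j+1) * ((j+1:ℕ):ℝ)^(s+1) / (Nat.factorial (j+1)) := by
              rw [Nat.factorial_succ]
              push_cast
              have key : (2:ℝ)^(j+1) * ((j:ℝ)+1)^(s+1) / (((j:ℝ)+1) * (Nat.factorial j : ℝ))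
                  = 2 * (2^j / (Nat.factorial j : ℝ) * ((j:ℝ)+1)^s) := by
                field_simp
                ring
              rw [key]
              have h1 : (0:ℝ) ≤ 2^j / (Nat.factorial j : ℝ) * ((j:ℝ)+1)^s := by positivity
              linarith
lemma pow_le_sl (s j : ℕ) (hs : 2 ≤ s) (hj : 1 ≤ j) :
    (j:ℝ)^s / (Nat.factorial j) ≤ ((s:ℝ)/Real.log s)^s := by
  have hs0' : 0 < s := by omega
  have hs0 : (0:ℝ) < s := by exact_mod_cast hs0'
  have hs1 : (1:ℝ) < s := by exact_mod_cast hs.trans_lt' one_lt_two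
  have hls : 0 < Real.log s := Real.log_pos hs1
  have hj0 : (0:ℝ) < j := by exact_mod_cast hj
  set L := Real.log (s:ℝ) with hL
  have hy : (0:ℝ) < (j:ℝ) * L / s := by positivity
  have h1 : Real.log ((j:ℝ) * L / s) ≤ (j:ℝ)*L/s - 1 := Real.log_le_sub_one_of_pos hy
  have h2 : Real.log (j:ℝ) = Real.log ((j:ℝ)*L/s) + Real.log ((s:ℝ)/L) := by
    rw [← Real.log_mul (ne_of_gt hy) (by positivity)]
    congr 1
    field_simp
  have hsy : (s:ℝ) * ((j:ℝ)*L/s) = (j:ℝ)*L := by field_simp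
  have h3 : (s:ℝ) * Real.log j ≤ (j:ℝ)*L - (s:ℝ) + (s:ℝ) * Real.log ((s:ℝ)/L) := by
    have h4 := mul_le_mul_of_nonneg_left h1 hs0.le
    rw [h2, mul_add]
    nlinarith
  have h5 : (j:ℝ)^s ≤ ((s:ℝ)/L)^s * ((s:ℝ)^j * Real.exp (-(s:ℝ))) := by
    have e1 : (j:ℝ)^s = Real.exp ((s:ℝ) * Real.log j) := by
      rw [show (s:ℝ) * Real.log (j:ℝ) = (s:ℕ) * Real.log (j:ℝ) by norm_num,
        Real.exp_nat_mul, Real.exp_log hj0]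
    have ea : Real.exp ((j:ℝ)*L) = (s:ℝ)^j := by
      rw [show (j:ℝ)*L = (j:ℕ)*L by norm_num, Real.exp_nat_mul, Real.exp_log hs0]
    have eb : Real.exp ((s:ℝ)*Real.log ((s:ℝ)/L)) = ((s:ℝ)/L)^s := by
      rw [show (s:ℝ)*Real.log ((s:ℝ)/L) = (s:ℕ)*Real.log ((s:ℝ)/L) by norm_num,
        Real.exp_nat_mul, Real.exp_log (by positivity)]
    have e2 : Real.exp ((j:ℝ)*L - (s:ℝ) + (s:ℝ) * Real.log ((s:ℝ)/L))
        = ((s:ℝ)/L)^s * ((s:ℝ)^j * Real.exp (-(s:ℝ))) := by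
      rw [show (j:ℝ)*L - (s:ℝ) + (s:ℝ) * Real.log ((s:ℝ)/L)
          = ((j:ℝ)*L) + ((s:ℝ) * Real.log ((s:ℝ)/L)) + (-(s:ℝ)) by ring,
        Real.exp_add, Real.exp_add, ea, eb]
      ring
    rw [e1, ← e2]
    exact Real.exp_le_exp.mpr h3
  have hfac : (0:ℝ) < (Nat.factorial j : ℝ) := by exact_mod_cast Nat.factorial_pos j
  calc (j:ℝ)^s / (Nat.factorial j)
      ≤ (((s:ℝ)/L)^s * ((s:ℝ)^j * Real.exp (-(s:ℝ)))) / (Nat.factorial j) := by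
        gcongr
    _ = ((s:ℝ)/L)^s * Real.exp (-(s:ℝ)) * ((s:ℝ)^j / (Nat.factorial j)) := by ring
    _ ≤ ((s:ℝ)/L)^s * Real.exp (-(s:ℝ)) * Real.exp (s:ℝ) := by
        refine mul_le_mul_of_nonneg_left ?_ (by positivity)
        exact Real.pow_div_factorial_le_exp _ hs0.le j
    _ = ((s:ℝ)/L)^s := by
        rw [mul_assoc, ← Real.exp_add]
        simp

lemma coeff_bound_2 (s j : ℕ) (hs : 2 ≤ s) (hj : 1 ≤ j) (hjs : j ≤ s) :
    2^j * (j:ℝ)^s / (Nat.factorial j)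
      ≤ (2 * Real.exp (Real.exp 1 / (Real.exp 1 - 1)))^s * ((s:ℝ)/Real.log s)^s := by
  have hE : (1:ℝ) ≤ Real.exp (Real.exp 1/(Real.exp 1 - 1)) := by
    refine Real.one_le_exp ?_
    have h1 : (0:ℝ) < Real.exp 1 - 1 := by
      have := Real.exp_one_gt_d9; linarith
    positivity
  have hsl : (0:ℝ) ≤ ((s:ℝ)/Real.log s)^s := by
    have hs1 : (1:ℝ) < s := by exact_mod_cast hs.trans_lt' one_lt_two
    have := Real.log_pos hs1
    positivity
  have h2 : (2:ℝ)^j ≤ 2^s := pow_le_pow_right₀ one_le_two hjs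
  calc 2^j * (j:ℝ)^s / (Nat.factorial j) = 2^j * ((j:ℝ)^s / (Nat.factorial j)) := by ring
    _ ≤ 2^s * ((s:ℝ)/Real.log s)^s := by
        refine mul_le_mul h2 (pow_le_sl s j hs hj) (by positivity) (by positivity)
    _ ≤ 2^s * (Real.exp (Real.exp 1/(Real.exp 1 - 1)))^s * ((s:ℝ)/Real.log s)^s := by
        refine mul_le_mul_of_nonneg_right ?_ hsl
        nlinarith [one_le_pow₀ hE (n := s), pow_pos (show (0:ℝ) < 2 by norm_num) s]
    _ = (2 * Real.exp (Real.exp 1/(Real.exp 1 - 1)))^s * ((s:ℝ)/Real.log s)^s := by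
        rw [mul_pow]
lemma poissonPMF_nonneg {lam : ℝ} (hl : 0 ≤ lam) (k : ℕ) : 0 ≤ poissonPMF lam k := by
  unfold poissonPMF; positivity

lemma summable_aux {lam : ℝ} (hl : 0 ≤ lam) (f : ℕ → ℝ) (C : ℝ) (hC : 0 ≤ C) (d : ℕ)
    (hf : ∀ k, |f k| ≤ C * ((k:ℝ)+1)^d) :
    Summable fun k => poissonPMF lam k * f k := by
  have hb : ∀ k : ℕ, |poissonPMF lam k * f k| ≤
      (C * (Nat.factorial d) * Real.exp 1 * Real.exp (-lam)) *
        ((Real.exp 1 * lam)^k / (Nat.factorial k)) := by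
    intro k
    rw [abs_mul, abs_of_nonneg (poissonPMF_nonneg hl k)]
    have hek : Real.exp ((k:ℝ)) = Real.exp 1 ^ k := by
      rw [show ((k:ℝ)) = (k:ℕ) * (1:ℝ) by norm_num, Real.exp_nat_mul]
    calc poissonPMF lam k * |f k|
        ≤ poissonPMF lam k * (C * ((k:ℝ)+1)^d) :=
          mul_le_mul_of_nonneg_left (hf k) (poissonPMF_nonneg hl k)
      _ ≤ poissonPMF lam k * (C * ((Nat.factorial d) * Real.exp ((k:ℝ)+1))) := by
          refine mul_le_mul_of_nonneg_left (mul_le_mul_of_nonneg_left ?_ hC)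
            (poissonPMF_nonneg hl k)
          have h1 := Real.pow_div_factorial_le_exp ((k:ℝ)+1) (by positivity) d
          have hd : (0:ℝ) < (Nat.factorial d : ℝ) := by exact_mod_cast Nat.factorial_pos d
          rw [div_le_iff₀ hd] at h1
          linarith
      _ = (C * (Nat.factorial d) * Real.exp 1 * Real.exp (-lam)) *
            ((Real.exp 1 * lam)^k / (Nat.factorial k)) := by
          unfold poissonPMF
          rw [Real.exp_add, hek, mul_pow]
          have hk : ((Nat.factorial k : ℝ)) ≠ 0 := by
            exact_mod_cast (Nat.factorial_pos k).ne'
          field_simp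
  have hs2 : Summable fun k => (C * (Nat.factorial d) * Real.exp 1 * Real.exp (-lam)) *
      ((Real.exp 1 * lam)^k / (Nat.factorial k)) :=
    (Real.summable_pow_div_factorial _).mul_left _
  exact Summable.of_abs (Summable.of_nonneg_of_le (fun k => abs_nonneg _) hb hs2)

lemma abs_sub_le_poly {lam : ℝ} (hl : 0 ≤ lam) (k : ℕ) :
    |(k:ℝ) - lam| ≤ (1+lam) * ((k:ℝ)+1) := by
  have h0 : (0:ℝ) ≤ (k:ℝ) := Nat.cast_nonneg k
  rw [abs_sub_le_iff]
  constructor <;> nlinarith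

lemma summable_cpow {lam : ℝ} (hl : 0 ≤ lam) (m : ℕ) :
    Summable fun k => poissonPMF lam k * ((k:ℝ) - lam)^m := by
  refine summable_aux hl _ ((1+lam)^m) (by positivity) m fun k => ?_
  rw [abs_pow, ← mul_pow]
  exact pow_le_pow_left₀ (abs_nonneg _) (abs_sub_le_poly hl k) m

lemma summable_abs_cpow {lam : ℝ} (hl : 0 ≤ lam) (m : ℕ) :
    Summable fun k => poissonPMF lam k * |(k:ℝ) - lam|^m := by
  refine summable_aux hl _ ((1+lam)^m) (by positivity) m fun k => ?_
  rw [abs_pow, abs_abs, ← mul_pow]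
  exact pow_le_pow_left₀ (abs_nonneg _) (abs_sub_le_poly hl k) m

lemma summable_mul_cpow {lam : ℝ} (hl : 0 ≤ lam) (m : ℕ) :
    Summable fun k => poissonPMF lam k * ((k:ℝ) * ((k:ℝ) - lam)^m) := by
  refine summable_aux hl _ ((1+lam)^m) (by positivity) (m+1) fun k => ?_
  have h0 : (0:ℝ) ≤ (k:ℝ) := Nat.cast_nonneg k
  rw [abs_mul, abs_pow, abs_of_nonneg h0]
  calc (k:ℝ) * |(k:ℝ) - lam|^m ≤ ((k:ℝ)+1) * ((1+lam) * ((k:ℝ)+1))^m := by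
        refine mul_le_mul (by linarith) (pow_le_pow_left₀ (abs_nonneg _) (abs_sub_le_poly hl k) m)
          (by positivity) (by positivity)
    _ = (1+lam)^m * ((k:ℝ)+1)^(m+1) := by rw [mul_pow, pow_succ]; ring
  
lemma summable_shift_cpow {lam : ℝ} (hl : 0 ≤ lam) (m : ℕ) :
    Summable fun k => poissonPMF lam k * (((k:ℝ)+1) - lam)^m := by
  refine summable_aux hl _ ((1+lam)^m) (by positivity) m fun k => ?_
  have h0 : (0:ℝ) ≤ (k:ℝ) := Nat.cast_nonneg k
  rw [abs_pow, ← mul_pow]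
  refine pow_le_pow_left₀ (abs_nonneg _) ?_ m
  rw [abs_sub_le_iff]
  constructor <;> nlinarith

lemma tsum_poissonPMF {lam : ℝ} : ∑' k, poissonPMF lam k = 1 := by
  calc ∑' k, poissonPMF lam k = ∑' k : ℕ, Real.exp (-lam) * (lam^k / (Nat.factorial k)) :=
      tsum_congr fun k => by unfold poissonPMF; ring
    _ = Real.exp (-lam) * ∑' k : ℕ, lam^k / (Nat.factorial k) := tsum_mul_left
    _ = Real.exp (-lam) * Real.exp lam := by
        congr 1
        rw [Real.exp_eq_exp_ℝ, NormedSpace.exp_eq_tsum_div]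
    _ = 1 := by rw [← Real.exp_add]; simp

lemma chen {lam : ℝ} (hl : 0 ≤ lam) (f : ℕ → ℝ)
    (h1 : Summable fun k => poissonPMF lam k * f (k+1)) :
    ∑' k, poissonPMF lam k * ((k:ℝ) * f k) = lam * ∑' k, poissonPMF lam k * f (k+1) := by
  set g : ℕ → ℝ := fun k => poissonPMF lam k * ((k:ℝ) * f k) with hg
  have key : ∀ k : ℕ, g (k+1) = lam * (poissonPMF lam k * f (k+1)) := by
    intro k
    show poissonPMF lam (k+1) * (((k+1:ℕ):ℝ) * f (k+1)) = _
    unfold poissonPMF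
    rw [Nat.factorial_succ]
    have hk : ((Nat.factorial k : ℝ)) ≠ 0 := by exact_mod_cast (Nat.factorial_pos k).ne'
    have hk1 : ((k:ℝ)+1) ≠ 0 := by positivity
    push_cast
    field_simp
    ring
  have h2 : Summable fun k => g (k+1) := by
    simp only [key]; exact h1.mul_left lam
  have hgsum : Summable g := (summable_nat_add_iff 1).mp h2
  rw [hgsum.tsum_eq_zero_add]
  have hg0 : g 0 = 0 := by simp [hg]
  rw [hg0, zero_add]
  calc ∑' k, g (k+1) = ∑' k, lam * (poissonPMF lam k * f (k+1)) := tsum_congr key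
    _ = lam * ∑' k, poissonPMF lam k * f (k+1) := tsum_mul_left
lemma moment : ∀ s : ℕ, ∀ lam : ℝ, 0 ≤ lam →
    ∑' k, poissonPMF lam k * ((k:ℝ) - lam)^s
      = ∑ j ∈ Finset.range (s+1), aa s j * lam^j := by
  intro s
  induction s using Nat.strong_induction_on with
  | _ s ih =>
    rcases s with _ | s
    · intro lam hl
      simp only [pow_zero, mul_one]
      rw [tsum_poissonPMF, Finset.sum_range_one]
      have : aa 0 0 = 1 := by rw [aa]
      rw [this]
      norm_num
    · intro lam hl
      have hsum0 : ∀ m : ℕ, Summable fun k => poissonPMF lam k * ((k:ℝ) - lam)^m :=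
        summable_cpow hl
      have e1 : ∑' k, poissonPMF lam k * ((k:ℝ) - lam)^(s+1)
          = ∑' k, poissonPMF lam k * ((k:ℝ) * ((k:ℝ) - lam)^s)
            - lam * ∑' k, poissonPMF lam k * ((k:ℝ) - lam)^s := by
        rw [← tsum_mul_left, ← Summable.tsum_sub (summable_mul_cpow hl s) ((hsum0 s).mul_left lam)]
        refine tsum_congr fun k => ?_
        rw [pow_succ]
        ring
      have hshift : Summable fun k => poissonPMF lam k * (((k+1:ℕ):ℝ) - lam)^s := by
        refine (summable_shift_cpow hl s).congr fun k => ?_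
        push_cast
        ring
      have e2 : ∑' k, poissonPMF lam k * ((k:ℝ) * ((k:ℝ) - lam)^s)
          = lam * ∑' k, poissonPMF lam k * (((k:ℝ)+1) - lam)^s := by
        rw [chen hl (fun k => ((k:ℝ) - lam)^s) hshift]
        congr 1
        refine tsum_congr fun k => ?_
        push_cast
        ring
      rw [e1, e2, ← mul_sub,
        ← Summable.tsum_sub (summable_shift_cpow hl s) (hsum0 s)]
      have e4 : ∀ k:ℕ,
          poissonPMF lam k * (((k:ℝ)+1) - lam)^s - poissonPMF lam k * ((k:ℝ) - lam)^s
          = ∑ i ∈ Finset.range s,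
              (Nat.choose s i : ℝ) * (poissonPMF lam k * ((k:ℝ) - lam)^i) := by
        intro k
        have hb : ((k:ℝ)+1) - lam = ((k:ℝ) - lam) + 1 := by ring
        rw [hb, add_pow, Finset.mul_sum, Finset.sum_range_succ]
        simp only [one_pow, Nat.choose_self, Nat.cast_one, mul_one, Nat.sub_self, pow_zero]
        rw [add_sub_cancel_right]
        exact Finset.sum_congr rfl fun i _ => by ring
      rw [tsum_congr e4, Summable.tsum_finsetSum (fun i _ => (hsum0 i).mul_left _)]
      have e6 : ∀ i ∈ Finset.range s,
          ∑' k, (Nat.choose s i : ℝ) * (poissonPMF lam k * ((k:ℝ)-lam)^i)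
            = (Nat.choose s i : ℝ) * ∑ j ∈ Finset.range (s+1), aa i j * lam^j := by
        intro i hi
        have hi' : i < s := Finset.mem_range.mp hi
        rw [tsum_mul_left, ih i (by omega) lam hl]
        congr 1
        refine Finset.sum_subset (by intro x hx; simp only [Finset.mem_range] at *; omega)
          fun j hj hj2 => ?_
        simp only [Finset.mem_range] at hj hj2
        rw [aa_eq_zero i j (by omega), zero_mul]
      rw [Finset.sum_congr rfl e6]
      have e7 : ∑ i ∈ Finset.range s,
          (Nat.choose s i : ℝ) * ∑ j ∈ Finset.range (s+1), aa i j * lam^j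
          = ∑ j ∈ Finset.range (s+1), aa (s+1) (j+1) * lam^j := by
        simp_rw [Finset.mul_sum]
        rw [Finset.sum_comm]
        refine Finset.sum_congr rfl fun j _ => ?_
        rw [aa_succ_succ, Finset.sum_mul]
        exact Finset.sum_congr rfl fun i _ => by ring
      rw [e7, Finset.mul_sum]
      conv_rhs => rw [Finset.sum_range_succ' (fun j => aa (s+1) j * lam^j) (s+1)]
      rw [aa_zero_right]
      simp only [zero_mul, add_zero, pow_zero]
      exact Finset.sum_congr rfl fun j _ => by ring

lemma moment_Icc (m : ℕ) (hm : 1 ≤ m) {lam : ℝ} (hl : 0 ≤ lam) :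
    ∑' k, poissonPMF lam k * ((k:ℝ) - lam)^m
      = ∑ j ∈ Finset.Icc 1 (m/2), aa m j * lam^j := by
  rw [moment m lam hl]
  symm
  refine Finset.sum_subset ?_ fun j hj hj2 => ?_
  · intro x hx
    simp only [Finset.mem_Icc] at hx
    simp only [Finset.mem_range]
    have := Nat.div_le_self m 2
    omega
  · simp only [Finset.mem_range] at hj
    simp only [Finset.mem_Icc, not_and, not_le] at hj2
    rcases Nat.eq_zero_or_pos j with h0 | h0
    · subst h0
      rcases m with _ | m'
      · omega
      · rw [aa_zero_right, zero_mul]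
    · have : m/2 < j := hj2 h0
      rw [aa_eq_zero m j (by omega), zero_mul]
/-- central moments of the Poisson empirical frequency `p̂ = X/n`,
`X ~ Poisson(np)`: exact polynomial expansion with controlled coefficients, and the
resulting absolute central moment bound. -/
theorem poisson_central_moments (s : ℕ) (hs : 2 ≤ s) :
    ∃ h : ℕ → ℝ,
      (∀ n : ℕ, 0 < n → ∀ p : ℝ, 0 ≤ p →
        poissonE (n * p) (fun k => ((k : ℝ) / n - p) ^ s) =
          ((n : ℝ) ^ s)⁻¹ * ∑ j ∈ Finset.Icc 1 (s / 2), h j * ((n : ℝ) * p) ^ j) ∧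
      (∀ j ∈ Finset.Icc 1 (s / 2),
        |h j| ≤ 2 ^ j * (j : ℝ) ^ s / (Nat.factorial j) ∧
        2 ^ j * (j : ℝ) ^ s / (Nat.factorial j) ≤
          (2 * Real.exp (Real.exp 1 / (Real.exp 1 - 1))) ^ s * ((s : ℝ) / Real.log s) ^ s) ∧
      ∃ C : ℝ, 0 < C ∧
        ∀ n : ℕ, 0 < n → ∀ p : ℝ, 0 ≤ p →
          poissonE (n * p) (fun k => |(k : ℝ) / n - p| ^ s) ≤
            C * max (((n : ℝ) * p) ^ ((s : ℝ) / 2)) ((n : ℝ) * p) / (n : ℝ) ^ s := by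
  refine ⟨aa s, ?_, ?_, ?_⟩
  · intro n hn p hp
    have hn0 : ((n:ℝ)) ≠ 0 := Nat.cast_ne_zero.mpr hn.ne'
    have hl : (0:ℝ) ≤ (n:ℝ) * p := by positivity
    simp only [poissonE]
    have ptw : ∀ k:ℕ, poissonPMF ((n:ℝ)*p) k * ((k:ℝ)/n - p)^s
        = ((n:ℝ)^s)⁻¹ * (poissonPMF ((n:ℝ)*p) k * ((k:ℝ) - (n:ℝ)*p)^s) := by
      intro k
      have hd : ((k:ℝ)/n - p) = ((k:ℝ) - (n:ℝ)*p) * ((n:ℝ))⁻¹ := by field_simp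
      rw [hd, mul_pow, ← inv_pow]
      ring
    rw [tsum_congr ptw, tsum_mul_left, moment_Icc s (by omega) hl]
  · intro j hj
    simp only [Finset.mem_Icc] at hj
    refine ⟨?_, coeff_bound_2 s j hs hj.1 (hj.2.trans (Nat.div_le_self s 2))⟩
    rw [abs_of_nonneg (aa_nonneg s j)]
    exact aa_le s j
  · set K : ℕ → ℝ := fun m => ∑ j ∈ Finset.Icc 1 (m/2), aa m j with hK
    have hKnn : ∀ m, 0 ≤ K m := fun m => Finset.sum_nonneg fun j _ => aa_nonneg m j
    set C : ℝ := K s + K (s-1) + K (s+1) + 1 with hC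
    have hC0 : 0 < C := by
      have h1 := hKnn s; have h2 := hKnn (s-1); have h3 := hKnn (s+1)
      rw [hC]; linarith
    refine ⟨C, hC0, ?_⟩
    intro n hn p hp
    have hn0 : ((n:ℝ)) ≠ 0 := Nat.cast_ne_zero.mpr hn.ne'
    have hl : (0:ℝ) ≤ (n:ℝ) * p := by positivity
    set lam := (n:ℝ) * p with hlam
    have hMle : ∀ m : ℕ, 1 ≤ m → lam ≤ 1 →
        ∑ j ∈ Finset.Icc 1 (m/2), aa m j * lam^j ≤ K m * lam := by
      intro m hm hlam1
      calc ∑ j ∈ Finset.Icc 1 (m/2), aa m j * lam^j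
          ≤ ∑ j ∈ Finset.Icc 1 (m/2), aa m j * lam := by
            refine Finset.sum_le_sum fun j hj => ?_
            simp only [Finset.mem_Icc] at hj
            refine mul_le_mul_of_nonneg_left ?_ (aa_nonneg m j)
            calc lam^j ≤ lam^1 := pow_le_pow_of_le_one hl hlam1 hj.1
              _ = lam := pow_one lam
        _ = K m * lam := by rw [← Finset.sum_mul]
    have hMge : ∀ m : ℕ, 1 ≤ lam →
        ∑ j ∈ Finset.Icc 1 (m/2), aa m j * lam^j ≤ K m * lam ^ (m/2) := by
      intro m hlam1
      calc ∑ j ∈ Finset.Icc 1 (m/2), aa m j * lam^j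
          ≤ ∑ j ∈ Finset.Icc 1 (m/2), aa m j * lam^(m/2) := by
            refine Finset.sum_le_sum fun j hj => ?_
            simp only [Finset.mem_Icc] at hj
            exact mul_le_mul_of_nonneg_left (pow_le_pow_right₀ hlam1 hj.2) (aa_nonneg m j)
        _ = K m * lam ^ (m/2) := by rw [← Finset.sum_mul]
    have main : (∑' k, poissonPMF lam k * |(k:ℝ) - lam|^s)
        ≤ C * max (lam ^ ((s:ℝ)/2)) lam := by
      rcases Nat.even_or_odd s with hev | hod
      · obtain ⟨t, ht⟩ := hev
        have heq : (∑' k, poissonPMF lam k * |(k:ℝ) - lam|^s)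
            = ∑ j ∈ Finset.Icc 1 (s/2), aa s j * lam^j := by
          rw [← moment_Icc s (by omega) hl]
          refine tsum_congr fun k => ?_
          rw [Even.pow_abs ⟨t, ht⟩]
        rw [heq]
        rcases le_total lam 1 with h1 | h1
        · have hKC : K s ≤ C := by rw [hC]; have := hKnn (s-1); have := hKnn (s+1); linarith
          calc ∑ j ∈ Finset.Icc 1 (s/2), aa s j * lam^j
              ≤ K s * lam := hMle s (by omega) h1
            _ ≤ C * lam := mul_le_mul_of_nonneg_right hKC hl
            _ ≤ C * max (lam ^ ((s:ℝ)/2)) lam :=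
                mul_le_mul_of_nonneg_left (le_max_right _ _) hC0.le
        · have hcast : ((s/2 : ℕ) : ℝ) = (s:ℝ)/2 := by
            have h2 : s/2 = t := by omega
            rw [h2, ht]; push_cast; ring
          have hrw : lam ^ ((s:ℝ)/2) = lam ^ (s/2 : ℕ) := by
            rw [← hcast, Real.rpow_natCast]
          have hKC : K s ≤ C := by rw [hC]; have := hKnn (s-1); have := hKnn (s+1); linarith
          calc ∑ j ∈ Finset.Icc 1 (s/2), aa s j * lam^j
              ≤ K s * lam ^ (s/2 : ℕ) := hMge s h1
            _ ≤ C * lam ^ (s/2 : ℕ) := by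
                refine mul_le_mul_of_nonneg_right hKC ?_
                positivity
            _ = C * lam ^ ((s:ℝ)/2) := by rw [hrw]
            _ ≤ C * max (lam ^ ((s:ℝ)/2)) lam :=
                mul_le_mul_of_nonneg_left (le_max_left _ _) hC0.le
      · obtain ⟨t, ht⟩ := hod
        have ht1 : 1 ≤ t := by omega
        have hs1eq : s - 1 = 2*t := by omega
        have hs2eq : s + 1 = 2*t+2 := by omega
        have hptsum : ∀ c : ℝ, 0 < c →
            (∑' k, poissonPMF lam k * |(k:ℝ) - lam|^s)
              ≤ c/2 * (∑' k, poissonPMF lam k * ((k:ℝ) - lam)^(2*t))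
                + c⁻¹/2 * (∑' k, poissonPMF lam k * ((k:ℝ) - lam)^(2*t+2)) := by
          intro c hc
          have hS1 := (summable_cpow hl (2*t)).mul_left (c/2)
          have hS2 := (summable_cpow hl (2*t+2)).mul_left (c⁻¹/2)
          rw [← tsum_mul_left, ← tsum_mul_left, ← hS1.tsum_add hS2]
          refine Summable.tsum_le_tsum (fun k => ?_) (summable_abs_cpow hl s) (hS1.add hS2)
          have hpm := poissonPMF_nonneg hl k
          have habs : |(k:ℝ) - lam| ≤ c/2 + ((k:ℝ)-lam)^2 * c⁻¹/2 := by
            have h2c : |(k:ℝ)-lam| * (2*c) ≤ c^2 + ((k:ℝ)-lam)^2 := by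
              nlinarith [sq_nonneg (|(k:ℝ)-lam| - c), sq_abs ((k:ℝ)-lam)]
            have hd := (le_div_iff₀ (by positivity : (0:ℝ) < 2*c)).mpr h2c
            calc |(k:ℝ)-lam| ≤ (c^2 + ((k:ℝ)-lam)^2)/(2*c) := hd
              _ = c/2 + ((k:ℝ)-lam)^2 * c⁻¹/2 := by field_simp
          have hynn : (0:ℝ) ≤ poissonPMF lam k * ((k:ℝ)-lam)^(2*t) :=
            mul_nonneg hpm ((even_two_mul t).pow_nonneg _)
          calc poissonPMF lam k * |(k:ℝ)-lam|^s
              = (poissonPMF lam k * ((k:ℝ)-lam)^(2*t)) * |(k:ℝ)-lam| := by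
                rw [ht, pow_succ, (even_two_mul t).pow_abs]
                ring
            _ ≤ (poissonPMF lam k * ((k:ℝ)-lam)^(2*t)) * (c/2 + ((k:ℝ)-lam)^2 * c⁻¹/2) :=
                mul_le_mul_of_nonneg_left habs hynn
            _ = c/2 * (poissonPMF lam k * ((k:ℝ)-lam)^(2*t))
                + c⁻¹/2 * (poissonPMF lam k * ((k:ℝ)-lam)^(2*t+2)) := by
                rw [pow_add]
                ring
        rcases le_total lam 1 with h1 | h1
        · have hb := hptsum 1 one_pos
          simp only [inv_one] at hb
          rw [moment_Icc (2*t) (by omega) hl, moment_Icc (2*t+2) (by omega) hl] at hb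
          have h2 := hMle (2*t) (by omega) h1
          have h3 := hMle (2*t+2) (by omega) h1
          have hstep : (∑' k, poissonPMF lam k * |(k:ℝ) - lam|^s)
              ≤ (K (2*t) + K (2*t+2))/2 * lam := by
            have e1 : (1:ℝ)/2 * (K (2*t) * lam) + 1/2 * (K (2*t+2) * lam)
                = (K (2*t) + K (2*t+2))/2 * lam := by ring
            linarith
          have hCge : (K (2*t) + K (2*t+2))/2 ≤ C := by
            rw [hC, hs1eq, hs2eq]
            have := hKnn s; have := hKnn (2*t); have := hKnn (2*t+2)
            linarith
          calc (∑' k, poissonPMF lam k * |(k:ℝ) - lam|^s)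
              ≤ (K (2*t) + K (2*t+2))/2 * lam := hstep
            _ ≤ C * lam := mul_le_mul_of_nonneg_right hCge hl
            _ ≤ C * max (lam ^ ((s:ℝ)/2)) lam :=
                mul_le_mul_of_nonneg_left (le_max_right _ _) hC0.le
        · have hlam0 : (0:ℝ) < lam := lt_of_lt_of_le one_pos h1
          set c := Real.sqrt lam with hcdef
          have hc0 : 0 < c := Real.sqrt_pos.mpr hlam0
          have hb := hptsum c hc0
          rw [moment_Icc (2*t) (by omega) hl, moment_Icc (2*t+2) (by omega) hl] at hb
          have h2 := hMge (2*t) h1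
          have h3 := hMge (2*t+2) h1
          rw [show (2*t)/2 = t by omega] at hb h2
          rw [show (2*t+2)/2 = t+1 by omega] at hb h3
          have e1 : c * lam^t = lam ^ ((s:ℝ)/2) := by
            rw [hcdef, Real.sqrt_eq_rpow, ← Real.rpow_natCast lam t, ← Real.rpow_add hlam0]
            congr 1
            rw [ht]; push_cast; ring
          have e2 : c⁻¹ * lam^(t+1) = lam ^ ((s:ℝ)/2) := by
            rw [hcdef, Real.sqrt_eq_rpow, ← Real.rpow_neg hl,
              ← Real.rpow_natCast lam (t+1), ← Real.rpow_add hlam0]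
            congr 1
            rw [ht]; push_cast; ring
          have hrp : 0 ≤ lam ^ ((s:ℝ)/2) := Real.rpow_nonneg hl _
          have hCge : K (2*t)/2 + K (2*t+2)/2 ≤ C := by
            rw [hC, hs1eq, hs2eq]
            have := hKnn s; have := hKnn (2*t); have := hKnn (2*t+2)
            linarith
          calc (∑' k, poissonPMF lam k * |(k:ℝ) - lam|^s)
              ≤ c/2 * (K (2*t) * lam^t) + c⁻¹/2 * (K (2*t+2) * lam^(t+1)) := by
                have hc2 : (0:ℝ) ≤ c/2 := by positivity
                have hc3 : (0:ℝ) ≤ c⁻¹/2 := by positivity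
                refine hb.trans ?_
                exact add_le_add (mul_le_mul_of_nonneg_left h2 hc2)
                  (mul_le_mul_of_nonneg_left h3 hc3)
            _ = (K (2*t)/2) * (c * lam^t) + (K (2*t+2)/2) * (c⁻¹ * lam^(t+1)) := by ring
            _ = (K (2*t)/2 + K (2*t+2)/2) * lam ^ ((s:ℝ)/2) := by rw [e1, e2]; ring
            _ ≤ C * lam ^ ((s:ℝ)/2) := mul_le_mul_of_nonneg_right hCge hrp
            _ ≤ C * max (lam ^ ((s:ℝ)/2)) lam :=
                mul_le_mul_of_nonneg_left (le_max_left _ _) hC0.le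
    simp only [poissonE]
    have ptw : ∀ k:ℕ, poissonPMF lam k * |(k:ℝ)/n - p|^s
        = ((n:ℝ)^s)⁻¹ * (poissonPMF lam k * |(k:ℝ) - lam|^s) := by
      intro k
      have hd : ((k:ℝ)/n - p) = ((k:ℝ) - lam) * ((n:ℝ))⁻¹ := by rw [hlam]; field_simp
      rw [hd, abs_mul, abs_of_nonneg (by positivity : (0:ℝ) ≤ ((n:ℝ))⁻¹), mul_pow, ← inv_pow]
      ring
    rw [tsum_congr ptw, tsum_mul_left, div_eq_mul_inv]
    calc ((n:ℝ)^s)⁻¹ * (∑' k, poissonPMF lam k * |(k:ℝ) - lam|^s)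
        ≤ ((n:ℝ)^s)⁻¹ * (C * max (lam ^ ((s:ℝ)/2)) lam) := by
          refine mul_le_mul_of_nonneg_left main ?_
          positivity
      _ = C * max (lam ^ ((s:ℝ)/2)) lam * ((n:ℝ)^s)⁻¹ := by ring
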